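/- arXiv:2007.00196 — 3 statements merged into one kernel-verified Lean document; each statement's English description precedes it below -/
import Mathlib

section
/- Let g ≥ 1 and let A_1, …, A_g, B_1, …, B_g be elements of SU(2) satisfying ∏_{j=1}^g [A_j, B_j] = -I, where [A,B] = A B A⁻¹ B⁻¹. If h ∈ SU(2) satisfies h A_j h⁻¹ = A_j and h B_j h⁻¹ = B_j for all j = 1, …, g, then h = I or h = -I. (Equivalently, the stabilizer of any point of M_g = μ⁻¹(-I) under the conjugation action of SU(2) is exactly the center {±I}, so the induced action of SO(3) = SU(2)/{±I} on M_g is free.) -/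
open Matrix
open scoped commutatorElement

lemma commute_of_commute_nonscalar (H M N : Matrix (Fin 2) (Fin 2) ℂ)
    (hns : H 0 1 ≠ 0 ∨ H 1 0 ≠ 0 ∨ H 0 0 ≠ H 1 1)
    (hM : M * H = H * M) (hN : N * H = H * N) : M * N = N * M := by
  have eM1 : (M * H) 0 0 = (H * M) 0 0 := by rw [hM]
  have eM2 : (M * H) 0 1 = (H * M) 0 1 := by rw [hM]
  have eM3 : (M * H) 1 0 = (H * M) 1 0 := by rw [hM]
  have eM4 : (M * H) 1 1 = (H * M) 1 1 := by rw [hM]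
  have eN1 : (N * H) 0 0 = (H * N) 0 0 := by rw [hN]
  have eN2 : (N * H) 0 1 = (H * N) 0 1 := by rw [hN]
  have eN3 : (N * H) 1 0 = (H * N) 1 0 := by rw [hN]
  have eN4 : (N * H) 1 1 = (H * N) 1 1 := by rw [hN]
  simp only [Matrix.mul_apply, Fin.sum_univ_two] at eM1 eM2 eM3 eM4 eN1 eN2 eN3 eN4
  by_cases hq : H 0 1 = 0
  · by_cases hr : H 1 0 = 0
    · have hps : H 0 0 ≠ H 1 1 := by tauto
      have hm01 : M 0 1 = 0 := by
        have h2 := eM2; rw [hq] at h2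
        have : M 0 1 * (H 1 1 - H 0 0) = 0 := by ring_nf; linear_combination h2
        rcases mul_eq_zero.mp this with h' | h'
        · exact h'
        · exact absurd (by linear_combination -h') hps
      have hm10 : M 1 0 = 0 := by
        have h3 := eM3; rw [hr] at h3
        have : M 1 0 * (H 0 0 - H 1 1) = 0 := by linear_combination h3
        rcases mul_eq_zero.mp this with h' | h'
        · exact h'
        · exact absurd (by linear_combination h') hps
      have hn01 : N 0 1 = 0 := by
        have h2 := eN2; rw [hq] at h2
        have : N 0 1 * (H 1 1 - H 0 0) = 0 := by linear_combination h2
        rcases mul_eq_zero.mp this with h' | h'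
        · exact h'
        · exact absurd (by linear_combination -h') hps
      have hn10 : N 1 0 = 0 := by
        have h3 := eN3; rw [hr] at h3
        have : N 1 0 * (H 0 0 - H 1 1) = 0 := by linear_combination h3
        rcases mul_eq_zero.mp this with h' | h'
        · exact h'
        · exact absurd (by linear_combination h') hps
      ext i j
      fin_cases i <;> fin_cases j <;>
        simp only [Fin.mk_zero, Fin.mk_one, Matrix.mul_apply, Fin.sum_univ_two, Fin.isValue]
      · linear_combination N 1 0 * hm01 - M 1 0 * hn01
      · linear_combination (M 0 0 - M 1 1) * hn01 - (N 0 0 - N 1 1) * hm01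
      · linear_combination (N 0 0 - N 1 1) * hm10 - (M 0 0 - M 1 1) * hn10
      · linear_combination N 0 1 * hm10 - M 0 1 * hn10
    · -- r = H 1 0 ≠ 0
      ext i j
      fin_cases i <;> fin_cases j <;>
        simp only [Fin.mk_zero, Fin.mk_one, Matrix.mul_apply, Fin.sum_univ_two, Fin.isValue]
      · apply mul_left_cancel₀ hr
        linear_combination M 1 0 * eN4 - N 1 0 * eM4
      · apply mul_left_cancel₀ hr
        apply mul_left_cancel₀ hr
        linear_combination (H 0 0 - H 1 1) * N 1 0 * eM4 - (H 0 0 - H 1 1) * M 1 0 * eN4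
          - H 1 0 * N 0 1 * eM3 + H 1 0 * M 0 1 * eN3
      · apply mul_left_cancel₀ hr
        linear_combination N 1 0 * eM3 - M 1 0 * eN3
      · apply mul_left_cancel₀ hr
        linear_combination N 1 0 * eM4 - M 1 0 * eN4
  · -- q = H 0 1 ≠ 0
    ext i j
    fin_cases i <;> fin_cases j <;>
      simp only [Fin.mk_zero, Fin.mk_one, Matrix.mul_apply, Fin.sum_univ_two, Fin.isValue]
    · apply mul_left_cancel₀ hq
      linear_combination N 0 1 * eM1 - M 0 1 * eN1
    · apply mul_left_cancel₀ hq
      linear_combination N 0 1 * eM2 - M 0 1 * eN2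
    · apply mul_left_cancel₀ hq
      apply mul_left_cancel₀ hq
      linear_combination H 0 1 * (N 1 1 - N 0 0) * eM1 + H 0 1 * (M 0 0 - M 1 1) * eN1
        + M 0 1 * H 1 0 * eN2 - N 0 1 * H 1 0 * eM2
    · apply mul_left_cancel₀ hq
      linear_combination M 0 1 * eN1 - N 0 1 * eM1

/-- `SU2` is the special unitary group of 2×2 complex matrices: the subgroup of the
unitary group `Matrix.unitaryGroup (Fin 2) ℂ` consisting of matrices of determinant 1. -/
def SU2 : Subgroup (Matrix.unitaryGroup (Fin 2) ℂ) where
  carrier := {A | Matrix.det (A : Matrix (Fin 2) (Fin 2) ℂ) = 1}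
  one_mem' := by simp
  mul_mem' := by
    intro a b ha hb
    simp only [Set.mem_setOf_eq] at *
    rw [Submonoid.coe_mul, Matrix.det_mul, ha, hb, one_mul]
  inv_mem' := by
    intro a ha
    simp only [Set.mem_setOf_eq] at *
    have h1 : ((a⁻¹ : Matrix.unitaryGroup (Fin 2) ℂ) : Matrix (Fin 2) (Fin 2) ℂ)
        = star (a : Matrix (Fin 2) (Fin 2) ℂ) := rfl
    rw [h1]
    change Matrix.det ((a : Matrix (Fin 2) (Fin 2) ℂ)ᴴ) = 1
    rw [Matrix.det_conjTranspose, ha, star_one]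

/-- If `A₁, …, A_g, B₁, …, B_g ∈ SU(2)` satisfy `∏ⱼ [Aⱼ, Bⱼ] = -I`, then any `h ∈ SU(2)`
that commutes with all of them (i.e. `h Aⱼ h⁻¹ = Aⱼ` and `h Bⱼ h⁻¹ = Bⱼ` for all `j`)
satisfies `h = I` or `h = -I`: the stabilizer is exactly the center `{±I}`,
so the induced `SO(3)`-action on `M_g = μ⁻¹(-I)` is free. -/
theorem stabilizer_of_relation_is_center
    (g : ℕ) (hg : 1 ≤ g) (A B : Fin g → SU2) (h : SU2)
    (hrel : (((List.ofFn fun j => ⁅A j, B j⁆).prod : SU2) : Matrix (Fin 2) (Fin 2) ℂ) = -1)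
    (hA : ∀ j, h * A j * h⁻¹ = A j) (hB : ∀ j, h * B j * h⁻¹ = B j) :
    (h : Matrix (Fin 2) (Fin 2) ℂ) = 1 ∨ (h : Matrix (Fin 2) (Fin 2) ℂ) = -1 := by
  by_contra hcon
  push_neg at hcon
  obtain ⟨h1, h2⟩ := hcon
  set Hm : Matrix (Fin 2) (Fin 2) ℂ := (h : Matrix (Fin 2) (Fin 2) ℂ) with hHm
  -- Hm is not scalar
  have hns : Hm 0 1 ≠ 0 ∨ Hm 1 0 ≠ 0 ∨ Hm 0 0 ≠ Hm 1 1 := by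
    by_contra hsc
    push_neg at hsc
    obtain ⟨hq, hr, hps⟩ := hsc
    have hdet : Hm.det = 1 := h.2
    rw [Matrix.det_fin_two, hq, hr, ← hps] at hdet
    have : (Hm 0 0 - 1) * (Hm 0 0 + 1) = 0 := by ring_nf; linear_combination hdet
    rcases mul_eq_zero.mp this with h' | h'
    · apply h1
      have h00 : Hm 0 0 = 1 := by linear_combination h'
      ext i j
      fin_cases i <;> fin_cases j <;>
        simp only [Fin.mk_zero, Fin.mk_one, Matrix.one_apply, Fin.isValue] <;>
        simp [h00, hq, hr, ← hps, h00]
    · apply h2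
      have h00 : Hm 0 0 = -1 := by linear_combination h'
      ext i j
      fin_cases i <;> fin_cases j <;>
        simp only [Fin.mk_zero, Fin.mk_one, Matrix.neg_apply, Matrix.one_apply, Fin.isValue] <;>
        simp [h00, hq, hr, ← hps, h00]
  -- any element of SU2 fixed by conjugation by h commutes with Hm as a matrix
  have key : ∀ x : SU2, h * x * h⁻¹ = x →
      (x : Matrix (Fin 2) (Fin 2) ℂ) * Hm = Hm * (x : Matrix (Fin 2) (Fin 2) ℂ) := by
    intro x hx
    have hx' : h * x = x * h := by
      rw [mul_inv_eq_iff_eq_mul] at hx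
      exact hx
    have := congrArg (fun y : SU2 => ((y : Matrix.unitaryGroup (Fin 2) ℂ) : Matrix (Fin 2) (Fin 2) ℂ)) hx'
    simpa using this.symm
  -- all A j, B j commute pairwise
  have hAB : ∀ j, A j * B j = B j * A j := by
    intro j
    have := commute_of_commute_nonscalar Hm (A j : Matrix (Fin 2) (Fin 2) ℂ)
      (B j : Matrix (Fin 2) (Fin 2) ℂ) hns (key (A j) (hA j)) (key (B j) (hB j))
    exact Subtype.ext (Subtype.ext this)
  have hcomm1 : ∀ j, ⁅A j, B j⁆ = (1 : SU2) := by
    intro j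
    rw [commutatorElement_def, mul_inv_eq_one, mul_inv_eq_iff_eq_mul]
    exact hAB j
  have hprod : (List.ofFn fun j => ⁅A j, B j⁆).prod = (1 : SU2) := by
    apply List.prod_eq_one
    intro x hx
    rw [List.mem_ofFn] at hx
    obtain ⟨j, rfl⟩ := hx
    exact hcomm1 j
  rw [hprod] at hrel
  have hone : (1 : Matrix (Fin 2) (Fin 2) ℂ) = -1 := by
    rw [← hrel]
    norm_num
  have h00 := congrFun (congrFun hone 0) 0
  simp [Matrix.one_apply] at h00
  norm_num at h00
end

section
/- If x, y ∈ SU(2) satisfy x y x⁻¹ y⁻¹ = -I, then tr(x) = 0 and tr(y) = 0. -/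
open Matrix

/-- If `x, y ∈ SU(2)` satisfy `x y x⁻¹ y⁻¹ = -I`, then `tr(x) = 0` and `tr(y) = 0`. -/
theorem trace_eq_zero_of_commutator_eq_neg_one
    (x y : SU2)
    (hxy : ((x * y * x⁻¹ * y⁻¹ : SU2) : Matrix (Fin 2) (Fin 2) ℂ) = -1) :
    Matrix.trace (x : Matrix (Fin 2) (Fin 2) ℂ) = 0 ∧
      Matrix.trace (y : Matrix (Fin 2) (Fin 2) ℂ) = 0 := by

  have hX : (x : Matrix (Fin 2) (Fin 2) ℂ) * ((x⁻¹ : SU2) : Matrix (Fin 2) (Fin 2) ℂ) = 1 := by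
    have := congrArg (fun z : SU2 => (z : Matrix (Fin 2) (Fin 2) ℂ)) (mul_inv_cancel x)
    simpa using this
  have hX' : ((x⁻¹ : SU2) : Matrix (Fin 2) (Fin 2) ℂ) * (x : Matrix (Fin 2) (Fin 2) ℂ) = 1 := by
    have := congrArg (fun z : SU2 => (z : Matrix (Fin 2) (Fin 2) ℂ)) (inv_mul_cancel x)
    simpa using this
  have hY : (y : Matrix (Fin 2) (Fin 2) ℂ) * ((y⁻¹ : SU2) : Matrix (Fin 2) (Fin 2) ℂ) = 1 := by
    have := congrArg (fun z : SU2 => (z : Matrix (Fin 2) (Fin 2) ℂ)) (mul_inv_cancel y)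
    simpa using this
  have hY' : ((y⁻¹ : SU2) : Matrix (Fin 2) (Fin 2) ℂ) * (y : Matrix (Fin 2) (Fin 2) ℂ) = 1 := by
    have := congrArg (fun z : SU2 => (z : Matrix (Fin 2) (Fin 2) ℂ)) (inv_mul_cancel y)
    simpa using this
  set X := (x : Matrix (Fin 2) (Fin 2) ℂ) with hXdef
  set Y := (y : Matrix (Fin 2) (Fin 2) ℂ) with hYdef
  set X' := ((x⁻¹ : SU2) : Matrix (Fin 2) (Fin 2) ℂ)
  set Y' := ((y⁻¹ : SU2) : Matrix (Fin 2) (Fin 2) ℂ)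
  have hc : X * Y * X' * Y' = -1 := by
    rw [show ((x * y * x⁻¹ * y⁻¹ : SU2) : Matrix (Fin 2) (Fin 2) ℂ)
        = X * Y * X' * Y' from by
      simp only [Subgroup.coe_mul, Matrix.UnitaryGroup.mul_val]; rfl] at hxy
    exact hxy
  -- From hc: X * Y * X' = -Y
  have h1 : X * Y * X' = -Y := by
    have := congrArg (fun M => M * Y) hc
    simp only [mul_assoc, hY'] at this
    simpa [mul_assoc] using this
  -- trace Y = 0
  have htY : Matrix.trace Y = 0 := by
    have h2 : Matrix.trace (X * Y * X') = Matrix.trace Y := by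
      rw [Matrix.trace_mul_cycle, hX', one_mul]
    rw [h1] at h2
    simp only [Matrix.trace_neg] at h2
    linear_combination -h2 / 2
  -- X * Y = - (Y * X)
  have h3 : X * Y = -(Y * X) := by
    have := congrArg (fun M => M * X) h1
    simp only [mul_assoc, hX'] at this
    simpa [mul_assoc] using this
  have htX : Matrix.trace X = 0 := by
    have h4 : Y' * (X * Y) = Y' * (-(Y * X)) := congrArg _ h3
    have h5 : Matrix.trace (Y' * (X * Y)) = Matrix.trace X := by
      rw [← mul_assoc, Matrix.trace_mul_cycle, hY, one_mul]
    have h6 : Matrix.trace (Y' * (-(Y * X))) = -Matrix.trace X := by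
      rw [mul_neg, Matrix.trace_neg, ← mul_assoc, hY', one_mul]
    rw [h4, h6] at h5
    linear_combination -h5 / 2
  exact ⟨htX, htY⟩
end

section
/- The set {(x, y) ∈ SU(2) × SU(2) : x y x⁻¹ y⁻¹ = -I} consists of a single orbit under the simultaneous conjugation action of SU(2): for any x, y ∈ SU(2) with x y x⁻¹ y⁻¹ = -I, there exists g ∈ SU(2) such that g x g⁻¹ = [[i, 0], [0, -i]] and g y g⁻¹ = [[0, i], [i, 0]]. -/
set_option maxHeartbeats 1000000

open Matrix

section Aux

private lemma auxHX (a b b' p q q' : ℂ) (hb : b * b' = 1 + a^2)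
    (hE : b * q' + b' * q = 2*a*p) :
    !![-(Complex.I + a), -b;
       -p*(1 - Complex.I*a) - Complex.I*q'*b, q*(Complex.I*a - 1) - Complex.I*p*b] *
      !![a, b; -b', -a] =
    !![Complex.I, 0; 0, -Complex.I] *
      !![-(Complex.I + a), -b;
         -p*(1 - Complex.I*a) - Complex.I*q'*b, q*(Complex.I*a - 1) - Complex.I*p*b] := by
  have hI := Complex.I_sq
  ext i j
  fin_cases i <;> fin_cases j <;>
    simp [Matrix.mul_apply, Fin.sum_univ_two]
  · linear_combination (1 : ℂ) * hb + (1 : ℂ) * hI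
  · ring
  · linear_combination (p*Complex.I) * hb + (-b*q' + a*p) * hI + (1 - a*Complex.I) * hE
  · linear_combination (q*Complex.I) * hb + (-b*p + a*q) * hI + (-b*Complex.I) * hE

private lemma auxHY (a b b' p q q' : ℂ) (hq : q * q' = 1 + p^2)
    (hE : b * q' + b' * q = 2*a*p) :
    !![-(Complex.I + a), -b;
       -p*(1 - Complex.I*a) - Complex.I*q'*b, q*(Complex.I*a - 1) - Complex.I*p*b] *
      !![p, q; -q', -p] =
    !![(0:ℂ), Complex.I; Complex.I, 0] *
      !![-(Complex.I + a), -b;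
         -p*(1 - Complex.I*a) - Complex.I*q'*b, q*(Complex.I*a - 1) - Complex.I*p*b] := by
  have hI := Complex.I_sq
  ext i j
  fin_cases i <;> fin_cases j <;>
    simp [Matrix.mul_apply, Fin.sum_univ_two]
  · linear_combination (b*q' - a*p) * hI
  · linear_combination (b*p - a*q) * hI
  · linear_combination (1 - a*Complex.I) * hq + (1:ℂ) * hI
  · linear_combination (-b*Complex.I) * hq

private lemma auxHG (a b b' p q q' : ℂ) (hb : b * b' = 1 + a^2) (hq : q * q' = 1 + p^2)
    (hE : b * q' + b' * q = 2*a*p) :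
    !![-(Complex.I + a), -b;
       -p*(1 - Complex.I*a) - Complex.I*q'*b, q*(Complex.I*a - 1) - Complex.I*p*b] *
      !![Complex.I + a, p*(1 - Complex.I*a) + Complex.I*q*b';
         -b', q'*(Complex.I*a - 1) - Complex.I*p*b'] =
    (2 - 2*Complex.I*a) • (1 : Matrix (Fin 2) (Fin 2) ℂ) := by
  have hI := Complex.I_sq
  ext i j
  fin_cases i <;> fin_cases j <;>
    simp [Matrix.mul_apply, Fin.sum_univ_two]
  · linear_combination (1:ℂ) * hb + (-1:ℂ) * hI
  · linear_combination (p*Complex.I) * hb + (-b'*q + a*p) * hI + (1 - a*Complex.I) * hE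
  · linear_combination (p*Complex.I) * hb + (-b*q' + a*p) * hI + (1 - a*Complex.I) * hE
  · linear_combination (-q*q'*Complex.I^2 + p^2*Complex.I^2) * hb
      + (1 - Complex.I^2 - 2*a*Complex.I) * hq + (-1:ℂ) * hI

end Aux

/-- The set `{(x, y) ∈ SU(2)² : x y x⁻¹ y⁻¹ = -I}` is a single orbit under simultaneous
conjugation: any such pair can be conjugated to `([[i,0],[0,-i]], [[0,i],[i,0]])`. -/
theorem commutator_neg_one_single_orbit
    (x y : SU2)
    (hxy : ((x * y * x⁻¹ * y⁻¹ : SU2) : Matrix (Fin 2) (Fin 2) ℂ) = -1) :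
    ∃ g : SU2,
      ((g * x * g⁻¹ : SU2) : Matrix (Fin 2) (Fin 2) ℂ) = !![Complex.I, 0; 0, -Complex.I] ∧
      ((g * y * g⁻¹ : SU2) : Matrix (Fin 2) (Fin 2) ℂ) = !![0, Complex.I; Complex.I, 0] := by
  set X : Matrix (Fin 2) (Fin 2) ℂ := ((x : Matrix.unitaryGroup (Fin 2) ℂ) : Matrix (Fin 2) (Fin 2) ℂ) with hXdef
  set Y : Matrix (Fin 2) (Fin 2) ℂ := ((y : Matrix.unitaryGroup (Fin 2) ℂ) : Matrix (Fin 2) (Fin 2) ℂ) with hYdef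
  -- reduce to finding a suitable matrix
  suffices h : ∃ gm : Matrix (Fin 2) (Fin 2) ℂ, gm * star gm = 1 ∧ gm.det = 1 ∧
      gm * X = !![Complex.I, 0; 0, -Complex.I] * gm ∧
      gm * Y = !![0, Complex.I; Complex.I, 0] * gm by
    obtain ⟨gm, hgu, hgd, hgX, hgY⟩ := h
    have hmem : gm ∈ Matrix.unitaryGroup (Fin 2) ℂ :=
      (Matrix.mem_unitaryGroup_iff).mpr hgu
    have hmem2 : (⟨gm, hmem⟩ : Matrix.unitaryGroup (Fin 2) ℂ) ∈ SU2 := hgd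
    refine ⟨⟨⟨gm, hmem⟩, hmem2⟩, ?_, ?_⟩
    · have hc : (((⟨⟨gm, hmem⟩, hmem2⟩ : SU2) * x * (⟨⟨gm, hmem⟩, hmem2⟩ : SU2)⁻¹ : SU2) :
          Matrix (Fin 2) (Fin 2) ℂ) = gm * X * star gm := rfl
      rw [hc, hgX, mul_assoc, hgu, mul_one]
    · have hc : (((⟨⟨gm, hmem⟩, hmem2⟩ : SU2) * y * (⟨⟨gm, hmem⟩, hmem2⟩ : SU2)⁻¹ : SU2) :
          Matrix (Fin 2) (Fin 2) ℂ) = gm * Y * star gm := rfl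
      rw [hc, hgY, mul_assoc, hgu, mul_one]
  -- basic facts
  have hXu : X * star X = 1 := x.1.prop.2
  have hXu' : star X * X = 1 := x.1.prop.1
  have hYu : Y * star Y = 1 := y.1.prop.2
  have hYu' : star Y * Y = 1 := y.1.prop.1
  have hdX : X.det = 1 := x.2
  have hdY : Y.det = 1 := y.2
  have hcoe : X * Y * star X * star Y = -1 := hxy
  have hanti : X * Y = -(Y * X) := by
    have h1 : X * Y * star X * star Y * Y = -1 * Y := by rw [hcoe]
    rw [mul_assoc _ (star Y) Y, hYu', mul_one] at h1
    have h2 : X * Y * star X * X = -1 * Y * X := by rw [h1]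
    rw [mul_assoc _ (star X) X, hXu', mul_one] at h2
    rw [h2, neg_one_mul, neg_mul]
  -- entries
  set a : ℂ := X 0 0 with ha_def
  set b : ℂ := X 0 1 with hb_def
  set p : ℂ := Y 0 0 with hp_def
  set q : ℂ := Y 0 1 with hq_def
  have entries : ∀ Z : Matrix (Fin 2) (Fin 2) ℂ, star Z * Z = 1 → Z.det = 1 →
      Z 1 0 = -(starRingEnd ℂ) (Z 0 1) ∧ Z 1 1 = (starRingEnd ℂ) (Z 0 0) := by
    intro Z hu hd
    have hadj : Zᴴ = adjugate Z := by
      have h1 : Z⁻¹ = Zᴴ := Matrix.inv_eq_left_inv hu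
      have h2 : Z⁻¹ = adjugate Z := by rw [Matrix.inv_def Z, hd]; simp
      rw [← h1, h2]
    rw [Matrix.adjugate_fin_two] at hadj
    have h01 := congrFun (congrFun hadj 0) 1
    have h00 := congrFun (congrFun hadj 0) 0
    simp [Matrix.conjTranspose_apply] at h00 h01
    refine ⟨?_, h00.symm⟩
    have := congrArg (starRingEnd ℂ) h01
    simpa using this
  obtain ⟨hX10, hX11⟩ := entries X hXu' hdX
  obtain ⟨hY10, hY11⟩ := entries Y hYu' hdY
  -- trace zero
  have trzero : ∀ Z W : Matrix (Fin 2) (Fin 2) ℂ, star W * W = 1 → W * star W = 1 →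
      Z * W = -(W * Z) → Z 0 0 + Z 1 1 = 0 := by
    intro Z W hWu hWu2 hZW
    have h1 : Z = -(W * Z * star W) := by
      calc Z = Z * W * star W := by rw [mul_assoc, hWu2, mul_one]
        _ = -(W * Z) * star W := by rw [hZW]
        _ = -(W * Z * star W) := by rw [neg_mul]
    have h2 : Z.trace = -Z.trace := by
      conv_lhs => rw [h1]
      rw [Matrix.trace_neg, Matrix.trace_mul_comm (W * Z) (star W), ← mul_assoc, hWu, one_mul]
    have h3 : Z.trace = 0 := by linear_combination h2 / 2
    rw [Matrix.trace_fin_two] at h3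
    exact h3
  have hca : (starRingEnd ℂ) a = -a := by
    have := trzero X Y hYu' hYu hanti
    rw [hX11] at this
    linear_combination this
  have hcp : (starRingEnd ℂ) p = -p := by
    have hanti' : Y * X = -(X * Y) := by rw [hanti, neg_neg]
    have := trzero Y X hXu' hXu hanti'
    rw [hY11] at this
    linear_combination this
  have hXform : X = !![a, b; -(starRingEnd ℂ) b, -a] := by
    rw [Matrix.eta_fin_two X, hX10, hX11, hca]
  have hYform : Y = !![p, q; -(starRingEnd ℂ) q, -p] := by
    rw [Matrix.eta_fin_two Y, hY10, hY11, hcp]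
  -- scalar relations
  have hbb : b * (starRingEnd ℂ) b = 1 + a^2 := by
    have h := hdX
    rw [hXform, Matrix.det_fin_two_of] at h
    linear_combination h
  have hqq : q * (starRingEnd ℂ) q = 1 + p^2 := by
    have h := hdY
    rw [hYform, Matrix.det_fin_two_of] at h
    linear_combination h
  have hE : b * (starRingEnd ℂ) q + (starRingEnd ℂ) b * q = 2*a*p := by
    have h := hanti
    rw [hXform, hYform] at h
    have h00 := congrFun (congrFun h 0) 0
    simp [Matrix.mul_apply, Fin.sum_univ_two] at h00
    linear_combination -h00
  by_cases ha : a = -Complex.I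
  · -- degenerate case : X = diag(-i, i)
    have hb0 : b = 0 := by
      have h := hbb
      rw [ha] at h
      have h2 : b * (starRingEnd ℂ) b = 0 := by
        linear_combination h + Complex.I_sq
      rw [Complex.mul_conj] at h2
      exact_mod_cast Complex.normSq_eq_zero.mp (by exact_mod_cast h2)
    have hp0 : p = 0 := by
      have h := hE
      rw [hb0] at h
      have h2 : (2 * a) * p = 0 := by
        rw [map_zero] at h
        linear_combination -h
      rcases mul_eq_zero.mp h2 with h3 | h3
      · exfalso
        rw [ha] at h3
        have : Complex.I = 0 := by linear_combination -h3/2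
        exact Complex.I_ne_zero this
      · exact h3
    have hq1 : q * (starRingEnd ℂ) q = 1 := by
      rw [hqq, hp0]; ring
    obtain ⟨e, he2⟩ : ∃ e : ℂ, e^2 = Complex.I * q :=
      IsAlgClosed.exists_pow_nat_eq _ two_pos
    have he3 : ((starRingEnd ℂ) e)^2 = -(Complex.I * (starRingEnd ℂ) q) := by
      have := congrArg (starRingEnd ℂ) he2
      simpa using this
    have hee : e * (starRingEnd ℂ) e = 1 := by
      have h1 : Complex.normSq e ^ 2 = 1 := by
        have h2 : (e^2) * (starRingEnd ℂ) (e^2) = 1 := by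
          rw [he2]
          have : (starRingEnd ℂ) (Complex.I * q) = -Complex.I * (starRingEnd ℂ) q := by simp
          rw [this]
          linear_combination -q * (starRingEnd ℂ) q * Complex.I_sq + hq1
        rw [Complex.mul_conj] at h2
        have h3 : Complex.normSq (e^2) = 1 := by exact_mod_cast h2
        rw [map_pow] at h3
        exact h3
      have h4 : Complex.normSq e = 1 := by
        nlinarith [Complex.normSq_nonneg e]
      rw [Complex.mul_conj, h4]; norm_num
    refine ⟨!![0, e; -(starRingEnd ℂ) e, 0], ?_, ?_, ?_, ?_⟩
    · ext i j
      fin_cases i <;> fin_cases j <;>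
        simp [Matrix.mul_apply, Fin.sum_univ_two, Matrix.conjTranspose_apply] <;>
        linear_combination hee
    · rw [Matrix.det_fin_two_of]
      linear_combination hee
    · rw [hXform, hb0, ha]
      ext i j
      fin_cases i <;> fin_cases j <;>
        simp [Matrix.mul_apply, Fin.sum_univ_two] <;> ring
    · rw [hYform, hp0]
      ext i j
      fin_cases i <;> fin_cases j <;>
        simp [Matrix.mul_apply, Fin.sum_univ_two]
      · -- e * conj q = I * conj e
        linear_combination ((starRingEnd ℂ) q * (starRingEnd ℂ) e) * he2
          + (Complex.I * (starRingEnd ℂ) e) * hq1 - (e * (starRingEnd ℂ) q) * hee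
      · -- conj e * q = -(I * e)
        linear_combination -(q * e) * he3 + ((starRingEnd ℂ) e * q) * hee
          + (Complex.I * e) * hq1
  · -- main case
    set b' : ℂ := (starRingEnd ℂ) b with hb'_def
    set q' : ℂ := (starRingEnd ℂ) q with hq'_def
    set G : Matrix (Fin 2) (Fin 2) ℂ :=
      !![Complex.I + a, p*(1 - Complex.I*a) + Complex.I*q*b';
         -b', q'*(Complex.I*a - 1) - Complex.I*p*b'] with hG_def
    set H : Matrix (Fin 2) (Fin 2) ℂ :=
      !![-(Complex.I + a), -b;
         -p*(1 - Complex.I*a) - Complex.I*q'*b, q*(Complex.I*a - 1) - Complex.I*p*b] with hH_def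
    have hHX := auxHX a b b' p q q' hbb hE
    have hHY := auxHY a b b' p q q' hqq hE
    have hHG := auxHG a b b' p q q' hbb hqq hE
    have hsH : star H = G := by
      rw [hH_def, hG_def]
      ext i j
      fin_cases i <;> fin_cases j <;>
        simp only [Matrix.star_apply, Complex.star_def, Matrix.conjTranspose_apply, Matrix.cons_val', Matrix.cons_val_zero,
          Matrix.cons_val_one, Matrix.head_cons, Matrix.head_fin_const, Matrix.empty_val',
          Matrix.cons_val_fin_one, Fin.isValue, Fin.zero_eta, Fin.mk_one, Matrix.of_apply,
          _root_.map_mul, _root_.map_add, _root_.map_sub, _root_.map_neg, _root_.map_one,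
          map_ofNat, Complex.conj_I, hca, hcp, Complex.conj_conj, hb'_def, hq'_def] <;> ring
    -- the normalizing scalar
    have hn : (2 : ℂ) - 2*Complex.I*a ≠ 0 := by
      intro h
      apply ha
      linear_combination (Complex.I/2) * h + a * Complex.I_sq
    have hdetHG : H.det * G.det = (2 - 2*Complex.I*a)^2 := by
      have := congrArg Matrix.det hHG
      rw [Matrix.det_mul] at this
      simp only [Matrix.det_smul, Matrix.det_one, Fintype.card_fin, mul_one] at this
      exact this
    have hGc : G.det = (starRingEnd ℂ) H.det := by
      rw [← hsH]
      rw [Matrix.star_eq_conjTranspose, Matrix.det_conjTranspose]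
      rfl
    have hDne : H.det ≠ 0 := by
      intro h
      rw [h, zero_mul] at hdetHG
      exact pow_ne_zero 2 hn hdetHG.symm
    obtain ⟨c, hc2⟩ : ∃ c : ℂ, c^2 = (H.det)⁻¹ :=
      IsAlgClosed.exists_pow_nat_eq _ two_pos
    -- realness
    set s : ℝ := a.im with hs_def
    have ha_is : a = (s : ℂ) * Complex.I := by
      have hre : a.re = 0 := by
        have := congrArg Complex.re hca
        simp [Complex.conj_re] at this
        linarith
      apply Complex.ext <;> simp [hre, hs_def]
    have hnn : (2 : ℂ) - 2*Complex.I*a = ((2 + 2*s : ℝ) : ℂ) := by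
      rw [ha_is]
      push_cast
      linear_combination (-2*(s:ℂ)) * Complex.I_sq
    have hs_ge : -1 < s := by
      have h1 : Complex.normSq b = 1 - s^2 := by
        have h := hbb
        rw [Complex.mul_conj, ha_is] at h
        have h2 : ((Complex.normSq b : ℝ) : ℂ) = ((1 - s^2 : ℝ) : ℂ) := by
          push_cast
          linear_combination h + (s:ℂ)^2 * Complex.I_sq
        exact_mod_cast h2
      have h2 : s^2 ≤ 1 := by nlinarith [Complex.normSq_nonneg b]
      have h3 : s ≠ -1 := by
        intro h
        apply ha
        rw [ha_is, h]
        push_cast; ring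
      cases' (le_or_gt s (-1)) with h4 h4
      · exfalso; apply h3; nlinarith
      · exact h4
    have hns : (0:ℝ) < 2 + 2*s := by linarith
    have hnormD : Complex.normSq H.det = (2 + 2*s)^2 := by
      have h := hdetHG
      rw [hGc, Complex.mul_conj, hnn] at h
      have : ((Complex.normSq H.det : ℝ) : ℂ) = (((2 + 2*s)^2 : ℝ) : ℂ) := by
        push_cast
        push_cast at h
        linear_combination h
      exact_mod_cast this
    have hcc : c * (starRingEnd ℂ) c = ((2 : ℂ) - 2*Complex.I*a)⁻¹ := by
      have h1 : Complex.normSq c = (2 + 2*s)⁻¹ := by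
        have h2 : Complex.normSq (c^2) = Complex.normSq ((H.det)⁻¹) := by rw [hc2]
        rw [map_pow, map_inv₀, hnormD] at h2
        have h3 : Complex.normSq c ^ 2 = ((2 + 2*s)⁻¹)^2 := by
          rw [h2]; rw [inv_pow]
        have h4 : (0:ℝ) < (2 + 2*s)⁻¹ := by positivity
        nlinarith [Complex.normSq_nonneg c]
      rw [Complex.mul_conj, h1, hnn]
      push_cast
      norm_num
    refine ⟨c • H, ?_, ?_, ?_, ?_⟩
    · have hstar : star (c • H) = (starRingEnd ℂ) c • G := by
        rw [star_smul, hsH]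
        rfl
      rw [hstar, smul_mul_assoc, mul_smul_comm, smul_smul, hHG, smul_smul]
      have hone : c * ((starRingEnd ℂ) c) * (2 - 2*Complex.I*a) = 1 := by
        rw [hcc]
        exact inv_mul_cancel₀ hn
      rw [hone, one_smul]
    · rw [Matrix.det_smul]
      simp only [Fintype.card_fin]
      rw [hc2]
      exact inv_mul_cancel₀ hDne
    · rw [hXform, smul_mul_assoc, hHX, mul_smul_comm]
    · rw [hYform, smul_mul_assoc, hHY, mul_smul_comm]
end
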